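/- Let σ: ℝ₊ → {1,…,m} be measurable, and for each j let f_j(x) = (−D_j + B_j − diag(x)B_j)x with D_j diagonal positive and B_j ≥ 0. Let φ(t; x⁰) be the solution of the switched SIS system ẋ = f_{σ(t)}(x), x(0) = x⁰ ∈ ℝⁿ₊, and let Φ_σ(t,0) be the evolution operator of the linearisation ẋ = (−D_{σ(t)} + B_{σ(t)})x. Then for any 0 ≤ x⁰ ≤ y⁰ and all t ≥ 0, φ(t; x⁰) ≤ Φ_σ(t,0) y⁰ componentwise. -/

import Mathlib

open Finset Filter Set
open scoped Topology

/-- A Metzler-type invariance lemma: if each component of `w` is differentiable on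
`[0,∞)` with a quasimonotonicity estimate at "minimal negative" points, and
`w 0 ≥ 0`, then `w t ≥ 0` for all `t ≥ 0`. -/
lemma metzler_nonneg {n : ℕ} (hn : 0 < n) (w w' : ℝ → Fin n → ℝ)
    (hw : ∀ t : ℝ, 0 ≤ t → ∀ i, HasDerivAt (fun s => w s i) (w' t i) t)
    (C : ℝ) (hC : 0 ≤ C)
    (h0 : ∀ i, 0 ≤ w 0 i)
    (hkey : ∀ t : ℝ, 0 ≤ t → ∀ i, ∀ g : ℝ, 0 < g → g ≤ 1 → w t i = -g →
      (∀ l, -g ≤ w t l) → -(w' t i) ≤ C * g) :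
    ∀ t : ℝ, 0 ≤ t → ∀ i, 0 ≤ w t i := by
  have hne : (Finset.univ : Finset (Fin n)).Nonempty := ⟨⟨0, hn⟩, Finset.mem_univ _⟩
  set g : ℝ → ℝ := fun s => (Finset.univ.sup' hne fun i => -(w s i)) ⊔ 0 with hgdef
  have gnonneg : ∀ s, 0 ≤ g s := fun s => le_max_right _ _
  have hleg : ∀ s i, -(w s i) ≤ g s := fun s i =>
    le_trans (Finset.le_sup' (fun i => -(w s i)) (Finset.mem_univ i)) (le_max_left _ _)
  have hcont : ∀ s : ℝ, 0 ≤ s → ∀ i, ContinuousAt (fun u => w u i) s := fun s hs i =>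
    (hw s hs i).continuousAt
  have gcont : ∀ s : ℝ, 0 ≤ s → ContinuousAt g s := by
    intro s hs
    exact (ContinuousAt.finset_sup'_apply hne fun i _ => (hcont s hs i).neg).sup
      continuousAt_const
  -- eventual one-sided bound from the derivative
  have deriv_ev : ∀ x : ℝ, 0 ≤ x → ∀ (i : Fin n) (ρ : ℝ), -(w' x i) < ρ →
      ∀ᶠ z in 𝓝[>] x, -(w z i) ≤ -(w x i) + (z - x) * ρ := by
    intro x hx i ρ hρ
    have hslope : Tendsto (slope (fun s => w s i) x) (𝓝[>] x) (𝓝 (w' x i)) :=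
      (hasDerivAt_iff_tendsto_slope.mp (hw x hx i)).mono_left
        (nhdsWithin_mono x fun z hz => ne_of_gt hz)
    filter_upwards [hslope (Ioi_mem_nhds (show -ρ < w' x i by linarith)),
      self_mem_nhdsWithin] with z h1 h2
    have hzx : (0 : ℝ) < z - x := sub_pos.mpr h2
    have h1' : -ρ < slope (fun s => w s i) x z := h1
    rw [slope_def_field, lt_div_iff₀ hzx] at h1'
    nlinarith [h1']
  -- the main Gronwall-type estimate
  have main : ∀ t0 : ℝ, 0 ≤ t0 → ∀ c : ℝ, 0 < c → g t0 ≤ c := by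
    intro t0 ht0 c hc
    set K : ℝ := C + 1 with hK
    have hKpos : 0 < K := by dsimp [K]; linarith
    set ε : ℝ := min (Real.exp (-(K * t0))) (c * Real.exp (-(K * t0))) with hε
    have hεpos : 0 < ε := lt_min (Real.exp_pos _) (mul_pos hc (Real.exp_pos _))
    set Bf : ℝ → ℝ := fun x => ε * Real.exp (K * x) with hBf
    set Bf' : ℝ → ℝ := fun x => ε * (Real.exp (K * x) * (K * 1)) with hBf'
    have hBd : ∀ x : ℝ, HasDerivAt Bf (Bf' x) x := by
      intro x
      exact ((Real.hasDerivAt_exp (K * x)).comp x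
        ((hasDerivAt_id x).const_mul K)).const_mul ε
    have hBle1 : ∀ x ∈ Icc (0:ℝ) t0, Bf x ≤ 1 := by
      intro x hx
      have h1 : ε ≤ Real.exp (-(K * t0)) := min_le_left _ _
      have h2 : Real.exp (K * x) ≤ Real.exp (K * t0) := by
        apply Real.exp_le_exp.mpr; nlinarith [hx.2]
      calc ε * Real.exp (K * x) ≤ Real.exp (-(K * t0)) * Real.exp (K * t0) := by
            apply mul_le_mul h1 h2 (Real.exp_pos _).le (Real.exp_pos _).le
        _ = 1 := by rw [← Real.exp_add]; simp
    set f' : ℝ → ℝ := fun x =>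
      if 0 < g x ∧ g x ≤ 1 then C * g x
      else (Finset.univ.sup' hne fun i => |w' x i|) + 1 + C * g x with hf'def
    -- the liminf-slope bound
    have key2 : ∀ x : ℝ, 0 ≤ x → ∀ r, f' x < r → ∀ᶠ z in 𝓝[>] x, slope g x z < r := by
      intro x hx r hr
      have hCg : 0 ≤ C * g x := mul_nonneg hC (gnonneg x)
      -- produce r'' with 0 < r'' < r and eventual componentwise bound
      obtain ⟨r'', hr''pos, hr''lt, hev⟩ :
          ∃ r'' : ℝ, 0 < r'' ∧ r'' < r ∧
            ∀ i, ∀ᶠ z in 𝓝[>] x, -(w z i) ≤ g x + (z - x) * r'' := by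
        by_cases hcase : 0 < g x ∧ g x ≤ 1
        · simp only [hf'def] at hr; rw [if_pos hcase] at hr
          refine ⟨(C * g x + r) / 2, by linarith, by linarith, ?_⟩
          intro i
          by_cases hact : w x i = -(g x)
          · have hder := hkey x hx i (g x) hcase.1 hcase.2 hact
              (fun l => by linarith [hleg x l])
            have := deriv_ev x hx i ((C * g x + r) / 2) (by linarith)
            filter_upwards [this] with z hz
            have : -(w x i) = g x := by linarith [hact, neg_neg (g x)]
            linarith [hz]
          · have hlt : -(w x i) < g x := lt_of_le_of_ne (hleg x i)
              (fun h => hact (by linarith))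
            have hev2 : ∀ᶠ z in 𝓝 x, -(w z i) < g x :=
              ((hcont x hx i).neg) (Iio_mem_nhds hlt)
            filter_upwards [hev2.filter_mono nhdsWithin_le_nhds, self_mem_nhdsWithin]
              with z h1 h2
            have : (0:ℝ) ≤ (z - x) * ((C * g x + r) / 2) :=
              mul_nonneg (by linarith [mem_Ioi.mp h2]) (by linarith)
            linarith
        · simp only [hf'def] at hr; rw [if_neg hcase] at hr
          set s : ℝ := (Finset.univ.sup' hne fun i => |w' x i|) + 1 with hs
          have hspos : 0 < s := by
            have : (0:ℝ) ≤ |w' x ⟨0, hn⟩| := abs_nonneg _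
            have h2 : |w' x ⟨0, hn⟩| ≤ Finset.univ.sup' hne fun i => |w' x i| :=
              Finset.le_sup' (fun i => |w' x i|) (Finset.mem_univ _)
            dsimp [s]; linarith
          refine ⟨s, hspos, by linarith, ?_⟩
          intro i
          have hwb : -(w' x i) < s := by
            have h2 : |w' x i| ≤ Finset.univ.sup' hne fun j => |w' x j| :=
              Finset.le_sup' (fun j => |w' x j|) (Finset.mem_univ _)
            have := neg_abs_le (w' x i)
            dsimp [s]; linarith
          filter_upwards [deriv_ev x hx i s hwb] with z hz
          linarith [hleg x i]
      -- combine components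
      filter_upwards [eventually_all.mpr hev, self_mem_nhdsWithin] with z hz hmem
      have hzx : (0:ℝ) < z - x := sub_pos.mpr (mem_Ioi.mp hmem)
      have hgz : g z ≤ g x + (z - x) * r'' := by
        apply max_le
        · exact Finset.sup'_le _ _ fun i _ => hz i
        · nlinarith [gnonneg x]
      rw [slope_def_field, div_lt_iff₀ hzx]
      nlinarith [hgz]
    -- apply the fencing theorem
    have hfence := image_le_of_liminf_slope_right_lt_deriv_boundary
      (f := g) (f' := f') (a := 0) (b := t0) (B := Bf) (B' := Bf')
      (fun x hx => (gcont x hx.1).continuousWithinAt)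
      (fun x hx r hr => ((key2 x hx.1 r hr).frequently))
      (by
        have h1 : (Finset.univ.sup' hne fun i => -(w 0 i)) ≤ 0 :=
          Finset.sup'_le _ _ fun i _ => by linarith [h0 i]
        have : g 0 ≤ 0 := max_le h1 le_rfl
        have hB0 : Bf 0 = ε := by simp [hBf]
        linarith [hεpos, hB0.ge, hB0.le])
      hBd
      (by
        intro x hx hgB
        have hBfpos : 0 < Bf x := mul_pos hεpos (Real.exp_pos _)
        have hb1 : Bf x ≤ 1 := hBle1 x ⟨hx.1, hx.2.le⟩
        have hcase : 0 < g x ∧ g x ≤ 1 := ⟨hgB ▸ hBfpos, hgB ▸ hb1⟩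
        simp only [hf'def]
        rw [if_pos hcase, hgB]
        have : Bf' x = Bf x * K := by dsimp [Bf', Bf]; ring
        rw [this]
        dsimp [K]
        nlinarith [hBfpos])
    have ht0mem : t0 ∈ Icc (0:ℝ) t0 := ⟨ht0, le_rfl⟩
    have hε2 : ε ≤ c * Real.exp (-(K * t0)) := min_le_right _ _
    have := hfence ht0mem
    have hfin : Bf t0 ≤ c := by
      have : ε * Real.exp (K * t0) ≤ (c * Real.exp (-(K * t0))) * Real.exp (K * t0) :=
        mul_le_mul_of_nonneg_right hε2 (Real.exp_pos _).le
      calc Bf t0 = ε * Real.exp (K * t0) := rfl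
        _ ≤ (c * Real.exp (-(K * t0))) * Real.exp (K * t0) := this
        _ = c := by rw [mul_assoc, ← Real.exp_add]; simp
    linarith
  -- conclude
  intro t ht i
  have hg0 : g t ≤ 0 := by
    by_contra h
    push_neg at h
    have := main t ht (g t / 2) (by linarith)
    linarith
  linarith [hleg t i]

/-- Row expansion for the Metzler matrix `-(diagonal d) + B`. -/
lemma rowA {n : ℕ} (D : Fin n → ℝ) (M : Matrix (Fin n) (Fin n) ℝ) (i : Fin n)
    (u : Fin n → ℝ) :
    ∑ l, ((-(Matrix.diagonal D) + M) i l) * u l = -(D i) * u i + ∑ l, M i l * u l := by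
  have : ∀ l, ((-(Matrix.diagonal D) + M) i l) * u l
      = -((if i = l then D i else 0) * u l) + M i l * u l := by
    intro l
    simp [Matrix.add_apply, Matrix.neg_apply, Matrix.diagonal_apply]
    split_ifs <;> ring
  simp only [this, Finset.sum_add_distrib, Finset.sum_neg_distrib]
  congr 1
  rw [← Finset.sum_neg_distrib]
  simp [ite_mul, Finset.sum_ite_eq, neg_mul]

/-- The solution of the switched SIS system is dominated by the
evolution operator of its linearisation applied to any larger initial value. -/
theorem stmt12 (n m : ℕ) (σ : ℝ → Fin m) (hσ : Measurable σ)
    (d : Fin m → Fin n → ℝ) (hd : ∀ j i, 0 < d j i)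
    (B : Fin m → Matrix (Fin n) (Fin n) ℝ) (hB : ∀ j i k, 0 ≤ B j i k)
    (x0 y0 : Fin n → ℝ) (hx0 : ∀ i, 0 ≤ x0 i) (hle : ∀ i, x0 i ≤ y0 i)
    (φ : ℝ → Fin n → ℝ) (hφ0 : φ 0 = x0)
    (hφ : ∀ t : ℝ, 0 ≤ t → HasDerivAt φ
      (fun i => -(d (σ t) i) * φ t i
        + (1 - φ t i) * ∑ k, B (σ t) i k * φ t k) t)
    (Φ : ℝ → Fin n → Fin n → ℝ) (hΦ0 : Φ 0 = fun i k => if i = k then 1 else 0)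
    (hΦ : ∀ t : ℝ, 0 ≤ t → HasDerivAt Φ
      (fun i k => ∑ l, ((-(Matrix.diagonal (d (σ t))) + B (σ t)) i l) * Φ t l k) t) :
    ∀ t : ℝ, 0 ≤ t → ∀ i, φ t i ≤ ∑ k, Φ t i k * y0 k := by
  rcases Nat.eq_zero_or_pos n with hn | hn
  · intro t ht i; exact absurd i.isLt (by omega)
  have hm : 0 < m := (σ 0).pos
  have hneP : (Finset.univ : Finset (Fin m × Fin n)).Nonempty :=
    ⟨(⟨0, hm⟩, ⟨0, hn⟩), Finset.mem_univ _⟩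
  set C2 : ℝ := Finset.univ.sup' hneP (fun p : Fin m × Fin n => ∑ k, B p.1 p.2 k) with hC2def
  have hC2 : ∀ j i, (∑ k, B j i k) ≤ C2 := fun j i =>
    Finset.le_sup' (fun p : Fin m × Fin n => ∑ k, B p.1 p.2 k) (Finset.mem_univ (j, i))
  have hC2nonneg : 0 ≤ C2 :=
    le_trans (Finset.sum_nonneg fun k _ => hB ⟨0, hm⟩ ⟨0, hn⟩ k) (hC2 ⟨0, hm⟩ ⟨0, hn⟩)
  set φ' : ℝ → Fin n → ℝ := fun t i =>
    -(d (σ t) i) * φ t i + (1 - φ t i) * ∑ k, B (σ t) i k * φ t k with hφ'def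
  have hφ' : ∀ t : ℝ, 0 ≤ t → ∀ i, HasDerivAt (fun s => φ s i) (φ' t i) t := fun t ht i =>
    hasDerivAt_pi.mp (hφ t ht) i
  -- Step A: the solution stays nonnegative
  have hφpos : ∀ t : ℝ, 0 ≤ t → ∀ i, 0 ≤ φ t i := by
    apply metzler_nonneg hn φ φ' hφ' (2 * C2) (by linarith)
      (by rw [hφ0]; exact hx0)
    intro t ht i g hg hg1 heq hall
    have hBi : (∑ k, B (σ t) i k) ≤ C2 := hC2 (σ t) i
    have hBge : 0 ≤ ∑ k, B (σ t) i k := Finset.sum_nonneg fun k _ => hB _ _ k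
    have hS : -(g * (∑ k, B (σ t) i k)) ≤ ∑ k, B (σ t) i k * φ t k := by
      have h1 : ∑ k, B (σ t) i k * (-g) ≤ ∑ k, B (σ t) i k * φ t k :=
        Finset.sum_le_sum fun k _ => mul_le_mul_of_nonneg_left (hall k) (hB _ _ k)
      have h2 : ∑ k, B (σ t) i k * (-g) = (∑ k, B (σ t) i k) * (-g) :=
        (Finset.sum_mul _ _ _).symm
      nlinarith [h1, h2]
    have hdp := hd (σ t) i
    simp only [hφ'def]
    rw [heq]
    nlinarith [mul_pos hdp hg, mul_nonneg hg.le hBge,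
      mul_nonneg (mul_nonneg hg.le hg.le) hBge, mul_nonneg hg.le (sub_nonneg.mpr hBi),
      mul_nonneg (mul_nonneg hg.le hg.le) (sub_nonneg.mpr hBi)]
  -- Step B: comparison with the linearisation
  set w : ℝ → Fin n → ℝ := fun t i => (∑ k, Φ t i k * y0 k) - φ t i with hwdef
  set Φ' : ℝ → Fin n → Fin n → ℝ := fun t i k =>
    ∑ l, ((-(Matrix.diagonal (d (σ t))) + B (σ t)) i l) * Φ t l k with hΦ'def
  have hΦ'c : ∀ t : ℝ, 0 ≤ t → ∀ i k, HasDerivAt (fun s => Φ s i k) (Φ' t i k) t :=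
    fun t ht i k => hasDerivAt_pi.mp (hasDerivAt_pi.mp (hΦ t ht) i) k
  set w' : ℝ → Fin n → ℝ := fun t i => (∑ k, Φ' t i k * y0 k) - φ' t i with hw'def
  have hw : ∀ t : ℝ, 0 ≤ t → ∀ i, HasDerivAt (fun s => w s i) (w' t i) t := fun t ht i =>
    (HasDerivAt.fun_sum fun k _ => (hΦ'c t ht i k).mul_const (y0 k)).sub (hφ' t ht i)
  have h0 : ∀ i, 0 ≤ w 0 i := by
    intro i
    have : w 0 i = y0 i - x0 i := by
      simp [hwdef, hΦ0, hφ0, ite_mul, Finset.sum_ite_eq, one_mul, zero_mul]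
    rw [this]
    linarith [hle i, hx0 i]
  have hwpos : ∀ t : ℝ, 0 ≤ t → ∀ i, 0 ≤ w t i := by
    apply metzler_nonneg hn w w' hw C2 hC2nonneg h0
    intro t ht i g hg hg1 heq hall
    have hveq : ∀ l, (∑ k, Φ t l k * y0 k) = w t l + φ t l := fun l => by
      simp [hwdef]
    have hrw : w' t i = -(d (σ t) i) * w t i + (∑ l, B (σ t) i l * w t l)
        + φ t i * (∑ k, B (σ t) i k * φ t k) := by
      have h1 : (∑ k, Φ' t i k * y0 k)
          = ∑ l, ((-(Matrix.diagonal (d (σ t))) + B (σ t)) i l) * (w t l + φ t l) := by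
        simp only [hΦ'def]
        calc ∑ k, (∑ l, ((-(Matrix.diagonal (d (σ t))) + B (σ t)) i l) * Φ t l k) * y0 k
            = ∑ k, ∑ l, ((-(Matrix.diagonal (d (σ t))) + B (σ t)) i l) * (Φ t l k * y0 k) := by
              simp [Finset.sum_mul, mul_assoc]
          _ = ∑ l, ∑ k, ((-(Matrix.diagonal (d (σ t))) + B (σ t)) i l) * (Φ t l k * y0 k) :=
              Finset.sum_comm
          _ = ∑ l, ((-(Matrix.diagonal (d (σ t))) + B (σ t)) i l) * (∑ k, Φ t l k * y0 k) := by
              simp [Finset.mul_sum]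
          _ = ∑ l, ((-(Matrix.diagonal (d (σ t))) + B (σ t)) i l) * (w t l + φ t l) := by
              refine Finset.sum_congr rfl fun l _ => ?_
              rw [hveq l]
      have h2 := rowA (d (σ t)) (B (σ t)) i (fun l => w t l + φ t l)
      simp only [hw'def, hφ'def, h1, h2]
      have h3 : ∑ l, B (σ t) i l * (w t l + φ t l)
          = (∑ l, B (σ t) i l * w t l) + ∑ l, B (σ t) i l * φ t l := by
        rw [← Finset.sum_add_distrib]
        exact Finset.sum_congr rfl fun l _ => by ring
      rw [h3]
      ring
    have hφt := hφpos t ht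
    have hS : 0 ≤ ∑ k, B (σ t) i k * φ t k :=
      Finset.sum_nonneg fun k _ => mul_nonneg (hB _ _ k) (hφt k)
    have hsum : -(C2 * g) ≤ ∑ l, B (σ t) i l * w t l := by
      have h1 : ∑ l, B (σ t) i l * (-g) ≤ ∑ l, B (σ t) i l * w t l :=
        Finset.sum_le_sum fun l _ => mul_le_mul_of_nonneg_left (hall l) (hB _ _ l)
      have h2 : ∑ l, B (σ t) i l * (-g) = (∑ l, B (σ t) i l) * (-g) :=
        (Finset.sum_mul _ _ _).symm
      nlinarith [h1, h2, hC2 (σ t) i]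
    rw [hrw, heq]
    nlinarith [mul_pos (hd (σ t) i) hg, mul_nonneg (hφt i) hS, hsum]
  intro t ht i
  have := hwpos t ht i
  simp only [hwdef] at this
  linarith
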